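/- Fix an integer r ≥ 4. There exists n_0 = n_0(r) such that if G is a K_{r+1}-free graph on n ≥ n_0 vertices with ν(P_3, G) = ex(n, P_3, K_{r+1}), then every vertex v of G satisfies ν_G(v, P_3) ≥ (12·((r−1)/r)^3 − 1/r^{10})·C(n−1, 3) − n^3/r^4, where ν_G(v, P_3) denotes the number of P_3 subgraphs of G containing v. -/

import Mathlib

open SimpleGraph

/-- The number of (not necessarily induced) subgraphs of `G` isomorphic to `T`. -/
noncomputable def subgraphCount {α β : Type*} (T : SimpleGraph α) (G : SimpleGraph β) : ℕ :=
  Nat.card {H : G.Subgraph // Nonempty (T ≃g H.coe)}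

/-- `G` is `F`-free: it contains no subgraph isomorphic to `F`. -/
def IsFFree {α β : Type*} (F : SimpleGraph α) (G : SimpleGraph β) : Prop :=
  ∀ H : G.Subgraph, IsEmpty (F ≃g H.coe)

/-- The generalized Turán number `ex(n, T, F)`. -/
noncomputable def genTuran (n : ℕ) {α γ : Type*} (T : SimpleGraph α) (F : SimpleGraph γ) : ℕ :=
  sSup {k | ∃ G : SimpleGraph (Fin n), IsFFree F G ∧ subgraphCount T G = k}

/-- The path with three edges on four vertices. -/
noncomputable def P3 : SimpleGraph (Fin 4) := pathGraph 4

/-- The number of (not necessarily induced) subgraphs of `G` isomorphic to `T`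
that contain the vertex `v`. -/
noncomputable def vertexSubgraphCount {α β : Type*} (T : SimpleGraph α) (G : SimpleGraph β)
    (v : β) : ℕ :=
  Nat.card {H : G.Subgraph // Nonempty (T ≃g H.coe) ∧ v ∈ H.verts}
open scoped Classical

/-- adjacency relation of the path on `Fin 4` -/
def crel (i j : Fin 4) : Prop := i.val + 1 = j.val ∨ j.val + 1 = i.val

instance : DecidableRel crel := fun i j => by unfold crel; infer_instance

lemma crel_symm {i j : Fin 4} (h : crel i j) : crel j i := h.symm

lemma crel_cases {i j : Fin 4} (h : crel i j) :
    (i=0∧j=1)∨(i=1∧j=0)∨(i=1∧j=2)∨(i=2∧j=1)∨(i=2∧j=3)∨(i=3∧j=2) := by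
  revert h; revert i j; decide

variable {α : Type*}

/-- `t` is a path tuple in `G` -/
def IsPT (G : SimpleGraph α) (t : Fin 4 → α) : Prop :=
  Function.Injective t ∧ ∀ i j, crel i j → G.Adj (t i) (t j)

lemma isPT_of {G : SimpleGraph α} {t : Fin 4 → α} (hinj : Function.Injective t)
    (h01 : G.Adj (t 0) (t 1)) (h12 : G.Adj (t 1) (t 2)) (h23 : G.Adj (t 2) (t 3)) :
    IsPT G t := by
  refine ⟨hinj, fun i j h => ?_⟩
  rcases crel_cases h with ⟨rfl,rfl⟩|⟨rfl,rfl⟩|⟨rfl,rfl⟩|⟨rfl,rfl⟩|⟨rfl,rfl⟩|⟨rfl,rfl⟩ <;>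
    first | assumption | exact h01.symm | exact h12.symm | exact h23.symm

def pathRel (t : Fin 4 → α) (x y : α) : Prop := ∃ i j, crel i j ∧ t i = x ∧ t j = y

/-- the subgraph associated to a path tuple -/
def pathSubgraph {G : SimpleGraph α} {t : Fin 4 → α} (h : IsPT G t) : G.Subgraph where
  verts := Set.range t
  Adj := pathRel t
  adj_sub := by rintro x y ⟨i, j, hc, rfl, rfl⟩; exact h.2 i j hc
  edge_vert := by rintro x y ⟨i, j, hc, rfl, rfl⟩; exact ⟨i, rfl⟩
  symm := by constructor; rintro x y ⟨i, j, hc, rfl, rfl⟩; exact ⟨j, i, crel_symm hc, rfl, rfl⟩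

lemma pathRel_iff {t : Fin 4 → α} (hinj : Function.Injective t) (i j : Fin 4) :
    pathRel t (t i) (t j) ↔ crel i j := by
  constructor
  · rintro ⟨a, b, hc, ha, hb⟩
    rwa [hinj ha, hinj hb] at hc
  · intro hc; exact ⟨i, j, hc, rfl, rfl⟩

lemma P3_adj (i j : Fin 4) : P3.Adj i j ↔ crel i j := by
  rw [P3, pathGraph_adj]; rfl

/-- the iso from P3 to the coe of a path subgraph -/
noncomputable def pathSubgraphIso {G : SimpleGraph α} {t : Fin 4 → α} (h : IsPT G t) :
    P3 ≃g (pathSubgraph h).coe where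
  toEquiv := Equiv.ofInjective t h.1
  map_rel_iff' := by
    intro i j
    simp only [Equiv.ofInjective_apply, Subgraph.coe_adj]
    show pathRel t (t i) (t j) ↔ P3.Adj i j
    rw [pathRel_iff h.1, P3_adj]
section C
variable {α : Type*} {G : SimpleGraph α}

/-- reversal permutation -/
def rv : Fin 4 → Fin 4 := ![3,2,1,0]

lemma rv_rv (i : Fin 4) : rv (rv i) = i := by revert i; decide

lemma rv_bij : Function.Bijective rv := by decide

lemma crel_rv (i j : Fin 4) : crel (rv i) (rv j) ↔ crel i j := by revert i j; decide

lemma isPT_rv {t : Fin 4 → α} (h : IsPT G t) : IsPT G (t ∘ rv) :=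
  ⟨h.1.comp rv_bij.1, fun i j hc => h.2 _ _ ((crel_rv i j).2 hc)⟩

lemma range_comp_rv (t : Fin 4 → α) : Set.range (t ∘ rv) = Set.range t := by
  rw [Set.range_comp, Set.range_eq_univ.2 rv_bij.2, Set.image_univ]

lemma pathRel_rv (t : Fin 4 → α) : pathRel (t ∘ rv) = pathRel t := by
  ext x y
  constructor
  · rintro ⟨i, j, hc, hx, hy⟩; exact ⟨rv i, rv j, (crel_rv i j).2 hc, hx, hy⟩
  · rintro ⟨i, j, hc, hx, hy⟩
    exact ⟨rv i, rv j, by rwa [crel_rv], by simpa [rv_rv] using hx, by simpa [rv_rv] using hy⟩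

lemma pathSubgraph_rv {t : Fin 4 → α} (h : IsPT G t) :
    pathSubgraph (isPT_rv h) = pathSubgraph h := by
  refine SimpleGraph.Subgraph.ext ?_ ?_
  · exact range_comp_rv t
  · exact pathRel_rv t

set_option maxRecDepth 20000 in
/-- path subgraphs determine the tuple up to reversal -/
lemma pathSubgraph_eq_iff {t t' : Fin 4 → α} (h : IsPT G t) (h' : IsPT G t')
    (heq : pathSubgraph h = pathSubgraph h') : t' = t ∨ t' = t ∘ rv := by
  have hverts : Set.range t = Set.range t' := congrArg Subgraph.verts heq
  have hadj : pathRel t = pathRel t' := congrArg Subgraph.Adj heq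
  -- define σ with t ∘ σ = t'
  have hmem : ∀ i, t' i ∈ Set.range t := fun i => hverts ▸ Set.mem_range_self i
  let σ : Fin 4 → Fin 4 := fun i => (Equiv.ofInjective t h.1).symm ⟨t' i, hmem i⟩
  have htσ : ∀ i, t (σ i) = t' i := by
    intro i
    show t ((Equiv.ofInjective t h.1).symm ⟨t' i, hmem i⟩) = t' i
    exact congrArg Subtype.val (Equiv.apply_symm_apply (Equiv.ofInjective t h.1) ⟨t' i, hmem i⟩)
  have hσrel : ∀ i j, crel (σ i) (σ j) ↔ crel i j := by
    intro i j
    rw [← pathRel_iff h.1 (σ i) (σ j), htσ i, htσ j, hadj, pathRel_iff h'.1]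
  have key : (∀ i, σ i = i) ∨ (∀ i, σ i = rv i) := by
    revert hσrel
    generalize σ = s
    revert s
    decide
  rcases key with hk | hk
  · left; funext i; rw [← htσ i, hk i]
  · right; funext i; show t' i = t (rv i); rw [← htσ i, hk i]

/-- extraction of a path tuple from an iso -/
lemma exists_pt_of_iso {H : G.Subgraph} (e : P3 ≃g H.coe) :
    ∃ t : Fin 4 → α, ∃ h : IsPT G t, H = pathSubgraph h := by
  classical
  let t : Fin 4 → α := fun i => (e i : α)
  have hinj : Function.Injective t := fun i j hij => e.toEquiv.injective (Subtype.ext hij)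
  have hcoe : ∀ i j, crel i j → H.Adj (t i) (t j) := by
    intro i j hc
    have : H.coe.Adj (e i) (e j) := e.map_rel_iff.2 ((P3_adj i j).2 hc)
    exact this
  have hpt : IsPT G t := ⟨hinj, fun i j hc => H.adj_sub (hcoe i j hc)⟩
  refine ⟨t, hpt, ?_⟩
  have hverts : H.verts = Set.range t := by
    ext x
    constructor
    · intro hx
      exact ⟨e.symm ⟨x, hx⟩, congrArg Subtype.val (e.apply_symm_apply ⟨x, hx⟩)⟩
    · rintro ⟨i, rfl⟩; exact (e i).2
  refine SimpleGraph.Subgraph.ext hverts ?_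
  ext x y
  constructor
  · intro hxy
    have hx : x ∈ H.verts := H.edge_vert hxy
    have hy : y ∈ H.verts := H.edge_vert hxy.symm
    have hcoe' : H.coe.Adj ⟨x, hx⟩ ⟨y, hy⟩ := hxy
    have h1 : H.coe.Adj (e (e.symm ⟨x, hx⟩)) (e (e.symm ⟨y, hy⟩)) := by
      rwa [e.apply_symm_apply, e.apply_symm_apply]
    have h2 : P3.Adj (e.symm ⟨x, hx⟩) (e.symm ⟨y, hy⟩) := e.map_rel_iff.1 h1
    refine ⟨e.symm ⟨x, hx⟩, e.symm ⟨y, hy⟩, (P3_adj _ _).1 h2, ?_, ?_⟩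
    · show (e (e.symm ⟨x, hx⟩) : α) = x
      rw [e.apply_symm_apply]
    · show (e (e.symm ⟨y, hy⟩) : α) = y
      rw [e.apply_symm_apply]
  · rintro ⟨i, j, hc, rfl, rfl⟩
    exact hcoe i j hc

end C
section E
set_option linter.unusedSectionVars false
open Finset
variable {α : Type*} [Fintype α] [LinearOrder α] (G : SimpleGraph α)

/-- number of path tuples satisfying a predicate on the vertex set, normalized -/
noncomputable def halfCount (Q : Set α → Prop) : ℕ :=
  (univ.filter (fun t : Fin 4 → α => IsPT G t ∧ t 0 < t 3 ∧ Q (Set.range t))).card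

/-- number of path tuples satisfying a predicate on the vertex set -/
noncomputable def fullCount (Q : Set α → Prop) : ℕ :=
  (univ.filter (fun t : Fin 4 → α => IsPT G t ∧ Q (Set.range t))).card

variable {G}

omit [Fintype α] [LinearOrder α] in
lemma exists_pt (H : G.Subgraph) (hne : Nonempty (P3 ≃g H.coe)) :
    ∃ t : Fin 4 → α, ∃ h : IsPT G t, H = pathSubgraph h :=
  exists_pt_of_iso hne.some

/-- canonical path tuple of a path subgraph -/
noncomputable def ctup (H : G.Subgraph) (hne : Nonempty (P3 ≃g H.coe)) : Fin 4 → α :=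
  let t := (exists_pt H hne).choose
  if t 0 < t 3 then t else t ∘ rv

lemma ctup_spec (H : G.Subgraph) (hne : Nonempty (P3 ≃g H.coe)) :
    ∃ h : IsPT G (ctup H hne), H = pathSubgraph h ∧ ctup H hne 0 < ctup H hne 3 := by
  obtain ⟨h, hH⟩ := (exists_pt H hne).choose_spec
  set t := (exists_pt H hne).choose with ht
  have hne03 : t 0 ≠ t 3 := fun hc => by simpa using h.1 hc
  unfold ctup
  rw [← ht]
  by_cases hlt : t 0 < t 3
  · rw [if_pos hlt]; exact ⟨h, hH, hlt⟩
  · rw [if_neg hlt]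
    refine ⟨isPT_rv h, ?_, ?_⟩
    · rw [pathSubgraph_rv h]; exact hH
    · show t (rv 0) < t (rv 3)
      have : rv 0 = 3 ∧ rv 3 = 0 := by decide
      rw [this.1, this.2]
      exact lt_of_le_of_ne (not_lt.1 hlt) (Ne.symm hne03)

lemma count_eq (Q : Set α → Prop) :
    Nat.card {H : G.Subgraph // Nonempty (P3 ≃g H.coe) ∧ Q H.verts} = halfCount G Q := by
  classical
  have e : {H : G.Subgraph // Nonempty (P3 ≃g H.coe) ∧ Q H.verts} ≃
      {t : Fin 4 → α // IsPT G t ∧ t 0 < t 3 ∧ Q (Set.range t)} := by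
    refine ⟨fun H => ⟨ctup H.1 H.2.1, ?_⟩, fun t => ⟨pathSubgraph t.2.1, ⟨pathSubgraphIso t.2.1⟩, t.2.2.2⟩, ?_, ?_⟩
    · obtain ⟨h, hH, hlt⟩ := ctup_spec H.1 H.2.1
      refine ⟨h, hlt, ?_⟩
      have h2 : Q (H.1 : G.Subgraph).verts ↔ Q (Set.range (ctup H.1 H.2.1)) := by
        constructor <;> intro hq
        · have := congrArg Subgraph.verts hH
          rw [this] at hq; exact hq
        · have := congrArg Subgraph.verts hH
          rw [this]; exact hq
      exact h2.1 H.2.2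
    · rintro ⟨H, hne, hQ⟩
      apply Subtype.ext
      obtain ⟨h, hH, hlt⟩ := ctup_spec H hne
      exact hH.symm
    · rintro ⟨t, ht, hlt, hQ⟩
      apply Subtype.ext
      have hne : Nonempty (P3 ≃g (pathSubgraph ht).coe) := ⟨pathSubgraphIso ht⟩
      show ctup (pathSubgraph ht) hne = t
      obtain ⟨h₁, hH₁, hlt₁⟩ := ctup_spec (pathSubgraph ht) hne
      have heq : pathSubgraph ht = pathSubgraph h₁ := hH₁ ▸ rfl
      rcases pathSubgraph_eq_iff ht h₁ heq with hc | hc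
      · exact hc
      · exfalso
        have h0 : ctup (pathSubgraph ht) hne 0 = t 3 := by
          rw [hc]; show t (rv 0) = t 3; norm_num [rv]
        have h3 : ctup (pathSubgraph ht) hne 3 = t 0 := by
          rw [hc]; show t (rv 3) = t 0; have h30 : rv 3 = 0 := by decide
          rw [h30]
        rw [h0, h3] at hlt₁
        exact absurd hlt (not_lt.2 hlt₁.le)
  rw [Nat.card_congr e, Nat.card_eq_fintype_card, halfCount]
  exact Fintype.card_subtype _

lemma fullCount_eq_two_mul (Q : Set α → Prop) :
    fullCount G Q = 2 * halfCount G Q := by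
  classical
  set A := (univ.filter (fun t : Fin 4 → α => IsPT G t ∧ t 0 < t 3 ∧ Q (Set.range t)))
  set B := (univ.filter (fun t : Fin 4 → α => IsPT G t ∧ t 3 < t 0 ∧ Q (Set.range t)))
  have hsplit : (univ.filter (fun t : Fin 4 → α => IsPT G t ∧ Q (Set.range t))) = A ∪ B := by
    ext t
    simp only [A, B, mem_filter, mem_union, mem_univ, true_and]
    constructor
    · rintro ⟨hpt, hQ⟩
      have : t 0 ≠ t 3 := fun hc => by simpa using hpt.1 hc
      rcases this.lt_or_gt with h | h
      · exact Or.inl ⟨hpt, h, hQ⟩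
      · exact Or.inr ⟨hpt, h, hQ⟩
    · rintro (⟨hpt, _, hQ⟩ | ⟨hpt, _, hQ⟩) <;> exact ⟨hpt, hQ⟩
  have hdisj : Disjoint A B := by
    rw [Finset.disjoint_left]
    intro t hA hB
    simp only [A, B, mem_filter] at hA hB
    exact absurd hA.2.2.1 (not_lt.2 hB.2.2.1.le)
  have hcard : B.card = A.card := by
    apply Finset.card_bij' (fun t _ => t ∘ rv) (fun t _ => t ∘ rv)
    · intro t ht
      simp only [B, mem_filter, mem_univ, true_and] at ht
      simp only [A, mem_filter, mem_univ, true_and]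
      refine ⟨isPT_rv ht.1, ?_, by rw [range_comp_rv]; exact ht.2.2⟩
      show t (rv 0) < t (rv 3)
      have : rv 0 = 3 ∧ rv 3 = 0 := by decide
      rw [this.1, this.2]; exact ht.2.1
    · intro t ht
      simp only [A, mem_filter, mem_univ, true_and] at ht
      simp only [B, mem_filter, mem_univ, true_and]
      refine ⟨isPT_rv ht.1, ?_, by rw [range_comp_rv]; exact ht.2.2⟩
      show t (rv 3) < t (rv 0)
      have : rv 0 = 3 ∧ rv 3 = 0 := by decide
      rw [this.1, this.2]; exact ht.2.1
    · intro t _; funext i; simp [Function.comp, rv_rv]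
    · intro t _; funext i; simp [Function.comp, rv_rv]
  rw [fullCount, hsplit, Finset.card_union_of_disjoint hdisj, hcard, halfCount, two_mul]

lemma two_mul_sc (G : SimpleGraph α) :
    2 * subgraphCount P3 G = fullCount G (fun _ => True) := by
  rw [fullCount_eq_two_mul, ← count_eq, subgraphCount]
  congr 1
  exact Nat.card_congr (Equiv.subtypeEquivRight (fun H => (and_iff_left trivial).symm))

lemma two_mul_vsc (G : SimpleGraph α) (v : α) :
    2 * vertexSubgraphCount P3 G v = fullCount G (fun s => v ∈ s) := by
  rw [fullCount_eq_two_mul, ← count_eq, vertexSubgraphCount]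

end E
section F
variable {α : Type*}

lemma isFFree_iff (m : ℕ) (G : SimpleGraph α) :
    IsFFree (⊤ : SimpleGraph (Fin m)) G ↔ G.CliqueFree m := by
  rw [cliqueFree_iff]
  constructor
  · intro hfree
    constructor
    intro f0
    have f := Copy.topEmbedding f0
    set H : G.Subgraph :=
      { verts := Set.range f
        Adj := fun x y => G.Adj x y ∧ x ∈ Set.range f ∧ y ∈ Set.range f
        adj_sub := fun h => h.1
        edge_vert := fun h => h.2.1
        symm := ⟨fun x y h => ⟨h.1.symm, h.2.2, h.2.1⟩⟩ } with hHdef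
    have e : (⊤ : SimpleGraph (Fin m)) ≃g H.coe := by
      refine ⟨Equiv.ofInjective f f.injective, ?_⟩
      intro i j
      simp only [Equiv.ofInjective_apply, Subgraph.coe_adj, top_adj]
      show (G.Adj (f i) (f j) ∧ _ ∧ _) ↔ i ≠ j
      constructor
      · intro h
        intro hij; rw [hij] at h; exact G.irrefl h.1
      · intro hij
        exact ⟨f.map_rel_iff.2 (by simpa using hij), ⟨i, rfl⟩, ⟨j, rfl⟩⟩
    exact (hfree H).false e
  · intro hne H
    constructor
    intro e
    refine hne.false (Embedding.toCopy ?_)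
    refine ⟨⟨fun i => (e i : α), fun i j hij => e.toEquiv.injective (Subtype.ext hij)⟩, ?_⟩
    intro i j
    simp only [Function.Embedding.coeFn_mk, top_adj]
    constructor
    · intro h
      intro hij; rw [hij] at h; exact G.irrefl h
    · intro hij
      have : H.coe.Adj (e i) (e j) := e.map_rel_iff.2 (by simpa using hij)
      exact H.adj_sub this

instance subgraph_finite [Finite α] (G : SimpleGraph α) : Finite G.Subgraph := by
  classical
  apply Finite.of_injective (fun H : G.Subgraph => (H.verts, H.Adj))
  intro H₁ H₂ h
  exact SimpleGraph.Subgraph.ext (congrArg Prod.fst h) (congrArg Prod.snd h)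

lemma sc_le_bound {β : Type*} [Finite α] (T : SimpleGraph β) (G : SimpleGraph α) :
    subgraphCount T G ≤ Nat.card (Set α × (α → α → Prop)) := by
  apply Nat.card_le_card_of_injective
    (fun H : {H : G.Subgraph // Nonempty (T ≃g H.coe)} => ((H : G.Subgraph).verts, (H : G.Subgraph).Adj))
  intro H₁ H₂ h
  exact Subtype.ext (SimpleGraph.Subgraph.ext (congrArg Prod.fst h) (congrArg Prod.snd h))

lemma le_genTuran {n : ℕ} {β γ : Type*} (T : SimpleGraph β) (F : SimpleGraph γ)
    (G₀ : SimpleGraph (Fin n)) (h : IsFFree F G₀) :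
    subgraphCount T G₀ ≤ genTuran n T F := by
  apply le_csSup
  · refine ⟨Nat.card (Set (Fin n) × (Fin n → Fin n → Prop)), ?_⟩
    rintro k ⟨G₁, _, rfl⟩
    exact sc_le_bound T G₁
  · exact ⟨G₀, h, rfl⟩

end F
section G
set_option linter.unusedSectionVars false
open Finset
variable {α : Type*} [Fintype α] [LinearOrder α] (G : SimpleGraph α)

lemma card_filter_irrel {β : Type*} [Fintype β] {p : β → Prop} (i1 i2 : DecidablePred p) :
    (@Finset.filter β p i1 Finset.univ).card = (@Finset.filter β p i2 Finset.univ).card :=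
  congrArg (fun i => (@Finset.filter β p i Finset.univ).card) (Subsingleton.elim i1 i2)

lemma fullCount_eq_sum (Q : Set α → Prop) :
    fullCount G Q = ∑ t ∈ univ.filter (fun t : Fin 4 → α => IsPT G t),
      (if Q (Set.range t) then 1 else 0) := by
  classical
  rw [fullCount, Finset.card_filter, Finset.sum_filter]
  exact Finset.sum_congr rfl (fun t _ => by
    by_cases h1 : IsPT G t <;> by_cases h2 : Q (Set.range t) <;> simp [h1, h2])

lemma sum_vertex_counts :
    ∑ v : α, fullCount G (fun s => v ∈ s) = 4 * fullCount G (fun _ => True) := by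
  simp_rw [fullCount_eq_sum]
  rw [Finset.sum_comm]
  have h2 : ∀ t ∈ univ.filter (fun t : Fin 4 → α => IsPT G t),
      (∑ v : α, @ite ℕ (v ∈ Set.range t) (Classical.propDecidable _) 1 0) = 4 := by
    intro t ht
    have hinj : Function.Injective t := (Finset.mem_filter.1 ht).2.1
    have hcf := @Finset.card_filter α (fun v => v ∈ Set.range t)
      (fun v => Classical.propDecidable _) univ
    rw [← hcf, Finset.filter_congr_decidable]
    have himg : univ.filter (fun v => v ∈ Set.range t) = Finset.image t univ := by
      ext v; simp [Set.mem_range, eq_comm]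
    rw [himg, Finset.card_image_of_injective _ hinj]
    simp
  refine (Finset.sum_congr rfl h2).trans ?_
  rw [Finset.sum_const, smul_eq_mul]
  simp [mul_comm]

lemma exists_big_vertex [Nonempty α] :
    ∃ u : α, 4 * fullCount G (fun _ => True) ≤ Fintype.card α * fullCount G (fun s => u ∈ s) := by
  by_contra hcon
  push_neg at hcon
  have hlt := Finset.sum_lt_sum_of_nonempty (Finset.univ_nonempty (α := α))
    (f := fun v => Fintype.card α * fullCount G (fun s => v ∈ s))
    (g := fun _ => 4 * fullCount G (fun _ => True))
    (fun v _ => hcon v)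
  rw [← Finset.mul_sum, sum_vertex_counts G, Finset.sum_const, smul_eq_mul,
    Finset.card_univ] at hlt
  exact lt_irrefl _ hlt

/-- helper indices -/
def o₁ (i j : Fin 4) : Fin 4 := if 0 ≠ i ∧ 0 ≠ j then 0 else if 1 ≠ i ∧ 1 ≠ j then 1 else 2
def o₂ (i j : Fin 4) : Fin 4 := if 3 ≠ i ∧ 3 ≠ j then 3 else if 2 ≠ i ∧ 2 ≠ j then 2 else 1

lemma o_cover : ∀ i j : Fin 4, i ≠ j → ∀ k : Fin 4, k = i ∨ k = j ∨ k = o₁ i j ∨ k = o₂ i j := by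
  decide

lemma pair_count_le (u v : α) (huv : u ≠ v) :
    fullCount G (fun s => u ∈ s ∧ v ∈ s) ≤ 16 * (Fintype.card α) ^ 2 := by
  classical
  have hinj : ∃ f : {t : Fin 4 → α // IsPT G t ∧ u ∈ Set.range t ∧ v ∈ Set.range t} →
      Fin 4 × Fin 4 × α × α, Function.Injective f := by
    refine ⟨fun T => ⟨T.2.2.1.choose, T.2.2.2.choose,
      T.1 (o₁ T.2.2.1.choose T.2.2.2.choose), T.1 (o₂ T.2.2.1.choose T.2.2.2.choose)⟩, ?_⟩
    rintro ⟨t, ht, hu, hv⟩ ⟨t', ht', hu', hv'⟩ heq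
    simp only [Prod.mk.injEq] at heq
    obtain ⟨e1, e2, e3, e4⟩ := heq
    apply Subtype.ext
    show t = t'
    have hiu : t hu.choose = u := hu.choose_spec
    have hiu' : t' hu'.choose = u := hu'.choose_spec
    have hiv : t hv.choose = v := hv.choose_spec
    have hiv' : t' hv'.choose = v := hv'.choose_spec
    have hne : hu.choose ≠ hv.choose := by
      intro hc; rw [hc, hiv] at hiu; exact huv hiu.symm
    funext k
    rcases o_cover hu.choose hv.choose hne k with rfl | rfl | rfl | rfl
    · rw [hiu, e1, hiu']
    · rw [hiv, e2, hiv']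
    · rw [e3, e1, e2]
    · rw [e4, e1, e2]
  obtain ⟨f, hf⟩ := hinj
  have hcard : Nat.card {t : Fin 4 → α // IsPT G t ∧ u ∈ Set.range t ∧ v ∈ Set.range t}
      ≤ 16 * (Fintype.card α) ^ 2 := by
    calc Nat.card {t : Fin 4 → α // IsPT G t ∧ u ∈ Set.range t ∧ v ∈ Set.range t}
        ≤ Nat.card (Fin 4 × Fin 4 × α × α) := Nat.card_le_card_of_injective f hf
      _ = 16 * (Fintype.card α) ^ 2 := by
          rw [Nat.card_eq_fintype_card]; simp [Fintype.card_prod]; ring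
  refine le_trans (le_of_eq ?_) hcard
  rw [fullCount, Nat.card_eq_fintype_card]
  exact (card_filter_irrel _ _).trans (Fintype.card_subtype
    (p := fun t : Fin 4 → α => IsPT G t ∧ u ∈ Set.range t ∧ v ∈ Set.range t)).symm

end G
section H
open Finset

lemma inj4 {β : Type*} {a b c d : β} (h1 : a≠b) (h2 : a≠c) (h3 : a≠d) (h4 : b≠c)
    (h5 : b≠d) (h6 : c≠d) : Function.Injective ![a,b,c,d] := by
  intro i j h
  fin_cases i <;> fin_cases j <;> simp_all

lemma tadj {n r : ℕ} (v w : Fin n) : (turanGraph n r).Adj v w ↔ (v:ℕ) % r ≠ (w:ℕ) % r := by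
  constructor <;> intro h <;> simp [turanGraph] at * <;> exact h

lemma class_card {n r : ℕ} (hr : 0 < r) (c : ℕ) :
    (Finset.filter (fun w : Fin n => (w:ℕ) % r = c) Finset.univ).card ≤ n / r + 1 := by
  have := Finset.card_le_card_of_injOn (fun w : Fin n => (w:ℕ) / r)
    (s := Finset.filter (fun w : Fin n => (w:ℕ) % r = c) Finset.univ)
    (t := Finset.range (n / r + 1)) ?_ ?_
  · simpa using this
  · intro w hw
    rw [Finset.mem_coe, Finset.mem_range, Nat.lt_succ_iff]
    exact Nat.div_le_div_right (le_of_lt w.isLt)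
  · intro w1 h1 w2 h2 hd
    rw [Finset.mem_coe, Finset.mem_filter] at h1 h2
    have e1 := Nat.div_add_mod (w1:ℕ) r
    have e2 := Nat.div_add_mod (w2:ℕ) r
    apply Fin.ext
    rw [h1.2] at e1
    rw [h2.2] at e2
    have hd' : (w1:ℕ) / r = (w2:ℕ) / r := hd
    rw [hd'] at e1
    omega

lemma neg_filter_card {n : ℕ} (p : Fin n → Prop) [DecidablePred p] {K : ℕ}
    (h : (Finset.filter p Finset.univ).card ≤ K) :
    n - K ≤ (Finset.filter (fun w => ¬ p w) Finset.univ).card := by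
  have := Finset.card_filter_add_card_filter_not (s := (Finset.univ : Finset (Fin n)))
    (p := p)
  rw [Finset.card_univ, Fintype.card_fin] at this
  have h2 : (Finset.filter (fun w => ¬ p w) (Finset.univ : Finset (Fin n))).card
      = (@Finset.filter _ (fun w => ¬ p w) (fun _ => instDecidableNot) Finset.univ).card :=
    card_filter_irrel _ _
  omega

lemma turan_lower (n r : ℕ) (hr : 4 ≤ r) (hn : 20 ≤ n) :
    n * (n - n / r - 4) ^ 3 ≤ fullCount (turanGraph n r) (fun _ => True) := by
  have hr0 : 0 < r := by omega
  set m := n - n / r - 4 with hm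
  have hnr : n / r + 5 ≤ n := by
    have h4 : n / r ≤ n / 4 := Nat.div_le_div_left hr (by norm_num)
    have h44 : n / 4 * 4 ≤ n := Nat.div_mul_le_self n 4
    omega
  -- the three choice sets
  set Sb : Fin n → Finset (Fin n) := fun a =>
    (Finset.filter (fun w : Fin n => ¬ ((w:ℕ) % r = (a:ℕ) % r)) Finset.univ) with hSbdef
  set Sc : Fin n → Fin n → Finset (Fin n) := fun a b =>
    (Finset.filter (fun w : Fin n => ¬ (w = a ∨ (w:ℕ) % r = (b:ℕ) % r)) Finset.univ) with hScdef
  set Sd : Fin n → Fin n → Fin n → Finset (Fin n) := fun a b c =>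
    (Finset.filter (fun w : Fin n => ¬ (w = a ∨ w = b ∨ (w:ℕ) % r = (c:ℕ) % r)) Finset.univ)
    with hSddef
  have hSb : ∀ a, m ≤ (Sb a).card := by
    intro a
    have h1 := neg_filter_card (fun w : Fin n => (w:ℕ) % r = (a:ℕ) % r) (class_card hr0 _)
    have h2 : n - (n / r + 1) ≤ (Sb a).card := by simpa using h1
    omega
  have hSc : ∀ a b, m ≤ (Sc a b).card := by
    intro a b
    have hsub : Finset.filter (fun w : Fin n => (w = a ∨ (w:ℕ) % r = (b:ℕ) % r)) Finset.univ
        ⊆ {a} ∪ (Finset.filter (fun w : Fin n => (w:ℕ) % r = (b:ℕ) % r) Finset.univ) := by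
      intro w hw
      rw [Finset.mem_filter] at hw
      rcases hw.2 with h | h
      · exact Finset.mem_union_left _ (by simp [h])
      · exact Finset.mem_union_right _ (by simp [h])
    have hK : (Finset.filter (fun w : Fin n => (w = a ∨ (w:ℕ) % r = (b:ℕ) % r))
        Finset.univ).card ≤ n / r + 2 := by
      have hu := Finset.card_union_le ({a} : Finset (Fin n))
        (Finset.filter (fun w : Fin n => (w:ℕ) % r = (b:ℕ) % r) Finset.univ)
      have hc := class_card (n := n) hr0 ((b:ℕ) % r)
      have hle := Finset.card_le_card hsub
      simp only [Finset.card_singleton] at hu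
      omega
    have h1 := neg_filter_card (fun w : Fin n => (w = a ∨ (w:ℕ) % r = (b:ℕ) % r)) hK
    have h2 : n - (n / r + 2) ≤ (Sc a b).card := by simpa only [] using h1
    omega
  have hSd : ∀ a b c, m ≤ (Sd a b c).card := by
    intro a b c
    have hsub : Finset.filter (fun w : Fin n => (w = a ∨ w = b ∨ (w:ℕ) % r = (c:ℕ) % r))
        Finset.univ
        ⊆ {a} ∪ ({b} ∪ (Finset.filter (fun w : Fin n => (w:ℕ) % r = (c:ℕ) % r) Finset.univ)) := by
      intro w hw
      rw [Finset.mem_filter] at hw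
      rcases hw.2 with h | h | h
      · exact Finset.mem_union_left _ (by simp [h])
      · exact Finset.mem_union_right _ (Finset.mem_union_left _ (by simp [h]))
      · exact Finset.mem_union_right _ (Finset.mem_union_right _ (by simp [h]))
    have hK : (Finset.filter (fun w : Fin n => (w = a ∨ w = b ∨ (w:ℕ) % r = (c:ℕ) % r))
        Finset.univ).card ≤ n / r + 3 := by
      have hu1 := Finset.card_union_le ({a} : Finset (Fin n))
        (({b} : Finset (Fin n)) ∪ (Finset.filter (fun w : Fin n => (w:ℕ) % r = (c:ℕ) % r)
          Finset.univ))
      have hu2 := Finset.card_union_le ({b} : Finset (Fin n))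
        (Finset.filter (fun w : Fin n => (w:ℕ) % r = (c:ℕ) % r) Finset.univ)
      have hc := class_card (n := n) hr0 ((c:ℕ) % r)
      have hle := Finset.card_le_card hsub
      simp only [Finset.card_singleton] at hu1 hu2
      omega
    have h1 := neg_filter_card (fun w : Fin n => (w = a ∨ w = b ∨ (w:ℕ) % r = (c:ℕ) % r)) hK
    have h2 : n - (n / r + 3) ≤ (Sd a b c).card := by simpa only [] using h1
    omega
  -- the injection
  set fb : Fin n → Fin m → Fin n := fun a j => (Sb a).orderEmbOfCardLe (hSb a) j with hfb
  set fc : Fin n → Fin n → Fin m → Fin n := fun a b j =>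
    (Sc a b).orderEmbOfCardLe (hSc a b) j with hfc
  set fd : Fin n → Fin n → Fin n → Fin m → Fin n := fun a b c j =>
    (Sd a b c).orderEmbOfCardLe (hSd a b c) j with hfd
  have hmaps' : ∀ (a : Fin n) (j1 j2 j3 : Fin m),
      ![a, fb a j1, fc a (fb a j1) j2, fd a (fb a j1) (fc a (fb a j1) j2) j3]
        ∈ Finset.filter (fun t : Fin 4 → Fin n => IsPT (turanGraph n r) t ∧ True)
          Finset.univ := by
    intro a j1 j2 j3
    set b := fb a j1 with hb
    set c := fc a b j2 with hc
    set d := fd a b c j3 with hd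
    have hbmem : b ∈ Sb a := Finset.orderEmbOfCardLe_mem _ _ _
    have hcmem : c ∈ Sc a b := Finset.orderEmbOfCardLe_mem _ _ _
    have hdmem : d ∈ Sd a b c := Finset.orderEmbOfCardLe_mem _ _ _
    rw [hSbdef] at hbmem; rw [hScdef] at hcmem; rw [hSddef] at hdmem
    simp only [Finset.mem_filter, Finset.mem_univ, true_and] at hbmem hcmem hdmem
    push_neg at hcmem hdmem
    rw [Finset.mem_filter]
    have hab : (a:ℕ) % r ≠ (b:ℕ) % r := fun h => hbmem h.symm
    have hbc : (b:ℕ) % r ≠ (c:ℕ) % r := fun h => hcmem.2 h.symm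
    have hcd : (c:ℕ) % r ≠ (d:ℕ) % r := fun h => hdmem.2.2 h.symm
    refine ⟨Finset.mem_univ _, ⟨?_, ?_⟩, trivial⟩
    · apply inj4
      · exact fun h => hab (by rw [h])
      · exact fun h => hcmem.1 (by rw [h])
      · exact fun h => hdmem.1 (by rw [h])
      · exact fun h => hbc (by rw [h])
      · exact fun h => hdmem.2.1 (by rw [h])
      · exact fun h => hcd (by rw [h])
    · intro i j hcr
      rcases crel_cases hcr with ⟨rfl,rfl⟩|⟨rfl,rfl⟩|⟨rfl,rfl⟩|⟨rfl,rfl⟩|⟨rfl,rfl⟩|⟨rfl,rfl⟩ <;>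
        show (turanGraph n r).Adj _ _ <;> rw [tadj] <;>
        first
          | exact hab | exact fun h => hab h.symm
          | exact hbc | exact fun h => hbc h.symm
          | exact hcd | exact fun h => hcd h.symm
  have hinj' : ∀ (a : Fin n) (j1 j2 j3 : Fin m) (a' : Fin n) (j1' j2' j3' : Fin m),
      (![a, fb a j1, fc a (fb a j1) j2, fd a (fb a j1) (fc a (fb a j1) j2) j3] : Fin 4 → Fin n)
        = ![a', fb a' j1', fc a' (fb a' j1') j2', fd a' (fb a' j1') (fc a' (fb a' j1') j2') j3']
      → (a, j1, j2, j3) = (a', j1', j2', j3') := by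
    intro a j1 j2 j3 a' j1' j2' j3' heq
    have h0 : a = a' := congrFun heq 0
    subst h0
    have h1 : fb a j1 = fb a j1' := congrFun heq 1
    have hj1 : j1 = j1' := (Finset.orderEmbOfCardLe _ (hSb a)).injective h1
    subst hj1
    have h2 : fc a (fb a j1) j2 = fc a (fb a j1) j2' := congrFun heq 2
    have hj2 : j2 = j2' := (Finset.orderEmbOfCardLe _ (hSc a _)).injective h2
    subst hj2
    have h3 : fd a (fb a j1) (fc a (fb a j1) j2) j3
        = fd a (fb a j1) (fc a (fb a j1) j2) j3' := congrFun heq 3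
    have hj3 : j3 = j3' := (Finset.orderEmbOfCardLe _ (hSd a _ _)).injective h3
    subst hj3
    rfl
  have hcard := Finset.card_le_card_of_injOn
    (f := fun p : Fin n × Fin m × Fin m × Fin m =>
      (![p.1, fb p.1 p.2.1, fc p.1 (fb p.1 p.2.1) p.2.2.1,
        fd p.1 (fb p.1 p.2.1) (fc p.1 (fb p.1 p.2.1) p.2.2.1) p.2.2.2] : Fin 4 → Fin n))
    (s := Finset.univ)
    (t := Finset.filter (fun t : Fin 4 → Fin n => IsPT (turanGraph n r) t ∧ True) Finset.univ)
    (fun p _ => hmaps' p.1 p.2.1 p.2.2.1 p.2.2.2)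
    (fun p _ q _ heq => hinj' p.1 p.2.1 p.2.2.1 p.2.2.2 q.1 q.2.1 q.2.2.1 q.2.2.2 heq)
  rw [Finset.card_univ] at hcard
  simp only [Fintype.card_prod, Fintype.card_fin] at hcard
  rw [fullCount]
  calc n * m ^ 3 = n * (m * (m * m)) := by ring
    _ ≤ _ := hcard
    _ = _ := card_filter_irrel _ _
end H
section I
open Finset
variable {α : Type*}

lemma card_filter_iff {β : Type*} [Fintype β] {p q : β → Prop} {i1 : DecidablePred p}
    {i2 : DecidablePred q} (h : ∀ x, p x ↔ q x) :
    (@Finset.filter β p i1 Finset.univ).card = (@Finset.filter β q i2 Finset.univ).card := by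
  have hpq : p = q := funext fun x => propext (h x)
  subst hpq
  exact card_filter_irrel _ _

/-- the graph where `v` is replaced by a clone of `u` -/
def cloneG (G : SimpleGraph α) (u v : α) : SimpleGraph α where
  Adj x y := (x ≠ v ∧ y ≠ v ∧ G.Adj x y) ∨ (x = v ∧ y ≠ v ∧ y ≠ u ∧ G.Adj u y) ∨
    (y = v ∧ x ≠ v ∧ x ≠ u ∧ G.Adj u x)
  symm := by
    constructor
    intro x y h
    rcases h with ⟨h1, h2, h3⟩ | ⟨h1, h2, h3, h4⟩ | ⟨h1, h2, h3, h4⟩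
    · exact Or.inl ⟨h2, h1, h3.symm⟩
    · exact Or.inr (Or.inr ⟨h1, h2, h3, h4⟩)
    · exact Or.inr (Or.inl ⟨h1, h2, h3, h4⟩)
  loopless := by
    constructor
    intro x h
    rcases h with ⟨h1, h2, h3⟩ | ⟨h1, h2, h3, h4⟩ | ⟨h1, h2, h3, h4⟩
    · exact G.irrefl h3
    · exact h2 h1
    · exact h2 h1

lemma clone_cliqueFree {G : SimpleGraph α} {u v : α} (huv : u ≠ v) {k : ℕ}
    (hG : G.CliqueFree k) : (cloneG G u v).CliqueFree k := by
  classical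
  intro s hs
  by_cases hv : v ∈ s
  · have hu : u ∉ s := by
      intro hu
      have hadj := hs.1 hv hu (Ne.symm huv)
      rcases hadj with ⟨h1, _, _⟩ | ⟨_, _, h3, _⟩ | ⟨h1, h2, _, _⟩
      · exact h1 rfl
      · exact h3 rfl
      · exact h2 rfl
    apply hG (insert u (s.erase v))
    constructor
    · intro a ha b hb hab
      simp only [Finset.coe_insert, Set.mem_insert_iff, Finset.coe_erase, Set.mem_diff,
        Finset.mem_coe, Set.mem_singleton_iff] at ha hb
      rcases ha with rfl | ⟨has, hav⟩
      · rcases hb with rfl | ⟨hbs, hbv⟩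
        · exact absurd rfl hab
        · have hadj := hs.1 hv hbs (Ne.symm hbv)
          rcases hadj with ⟨h1, _, _⟩ | ⟨_, _, _, h4⟩ | ⟨h1, _, _, _⟩
          · exact absurd rfl h1
          · exact h4
          · exact absurd h1 hbv
      · rcases hb with rfl | ⟨hbs, hbv⟩
        · have hadj := hs.1 hv has (Ne.symm hav)
          rcases hadj with ⟨h1, _, _⟩ | ⟨_, _, _, h4⟩ | ⟨h1, _, _, _⟩
          · exact absurd rfl h1
          · exact h4.symm
          · exact absurd h1 hav
        · have hadj := hs.1 has hbs hab
          rcases hadj with ⟨_, _, h3⟩ | ⟨h1, _, _, _⟩ | ⟨h1, _, _, _⟩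
          · exact h3
          · exact absurd h1 hav
          · exact absurd h1 hbv
    · rw [Finset.card_insert_of_notMem (fun hu' => hu (Finset.mem_of_mem_erase hu')),
        Finset.card_erase_of_mem hv, hs.2]
      have : 0 < k := by
        rcases Nat.eq_zero_or_pos k with rfl | h
        · have hse : s = ∅ := Finset.card_eq_zero.1 hs.2
          rw [hse] at hv
          simp at hv
        · exact h
      omega
  · apply hG s
    refine ⟨?_, hs.2⟩
    intro a ha b hb hab
    have hadj := hs.1 ha hb hab
    rcases hadj with ⟨_, _, h3⟩ | ⟨h1, _, _, _⟩ | ⟨h1, _, _, _⟩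
    · exact h3
    · exact absurd (h1 ▸ ha) hv
    · exact absurd (h1 ▸ hb) hv

end I
section I2
open Finset
variable {α : Type*} [Fintype α] [LinearOrder α]

lemma card_split {β : Type*} [Fintype β] {p q : β → Prop} {i0 : DecidablePred p}
    {i1 : DecidablePred (fun x => p x ∧ q x)} {i2 : DecidablePred (fun x => p x ∧ ¬ q x)} :
    (@Finset.filter β p i0 Finset.univ).card
      = (@Finset.filter β (fun x => p x ∧ q x) i1 Finset.univ).card
        + (@Finset.filter β (fun x => p x ∧ ¬ q x) i2 Finset.univ).card := by
  classical
  have hun : (@Finset.filter β (fun x => p x ∧ q x) i1 Finset.univ)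
      ∪ (@Finset.filter β (fun x => p x ∧ ¬ q x) i2 Finset.univ)
      = @Finset.filter β p i0 Finset.univ := by
    ext x
    simp only [Finset.mem_union, Finset.mem_filter, Finset.mem_univ, true_and]
    by_cases h : q x <;> tauto
  have hdis : Disjoint (@Finset.filter β (fun x => p x ∧ q x) i1 Finset.univ)
      (@Finset.filter β (fun x => p x ∧ ¬ q x) i2 Finset.univ) := by
    rw [Finset.disjoint_left]
    intro x h1 h2
    rw [Finset.mem_filter] at h1 h2
    exact h2.2.2 h1.2.2
  rw [← hun, Finset.card_union_of_disjoint hdis]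

lemma clone_count (G : SimpleGraph α) (u v : α) (huv : u ≠ v) :
    fullCount G (fun _ => True) + fullCount G (fun s => u ∈ s)
      ≤ fullCount (cloneG G u v) (fun _ => True) + fullCount G (fun s => v ∈ s)
        + fullCount G (fun s => u ∈ s ∧ v ∈ s) := by
  classical
  set sw : α → α := fun x => if x = u then v else x with hsw
  set A := Finset.filter (fun t : Fin 4 → α => IsPT G t ∧ ¬ v ∈ Set.range t) Finset.univ with hA
  set D := Finset.filter (fun t : Fin 4 → α => (IsPT G t ∧ u ∈ Set.range t) ∧ ¬ v ∈ Set.range t)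
    Finset.univ with hD
  -- membership facts
  have hDfact : ∀ t ∈ D, IsPT G t ∧ u ∈ Set.range t ∧ v ∉ Set.range t := by
    intro t ht
    rw [hD, Finset.mem_filter] at ht
    exact ⟨ht.2.1.1, ht.2.1.2, ht.2.2⟩
  have hrecov : ∀ t : Fin 4 → α, v ∉ Set.range t →
      (fun x => if x = v then u else x) ∘ (sw ∘ t) = t := by
    intro t hv
    funext i
    by_cases h : t i = u
    · simp [hsw, h, Ne.symm huv]
    · have hne : t i ≠ v := fun hc => hv ⟨i, hc⟩
      simp [hsw, h, hne]
  have hswpt : ∀ t ∈ D, IsPT (cloneG G u v) (sw ∘ t) ∧ v ∈ Set.range (sw ∘ t) := by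
    intro t ht
    obtain ⟨hpt, ⟨iu, hiu⟩, hv⟩ := hDfact t ht
    have hnev : ∀ i, t i ≠ v := fun i hc => hv ⟨i, hc⟩
    constructor
    · constructor
      · intro i j hij
        apply hpt.1
        simp only [Function.comp, hsw] at hij
        by_cases h1 : t i = u <;> by_cases h2 : t j = u
        · rw [h1, h2]
        · rw [if_pos h1, if_neg h2] at hij; exact absurd hij.symm (hnev j)
        · rw [if_neg h1, if_pos h2] at hij; exact absurd hij (hnev i)
        · rwa [if_neg h1, if_neg h2] at hij
      · intro i j hcr
        have hadj := hpt.2 i j hcr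
        have hne : t i ≠ t j := fun hc => (SimpleGraph.irrefl G) (hc ▸ hadj)
        show (cloneG G u v).Adj (sw (t i)) (sw (t j))
        by_cases h1 : t i = u <;> by_cases h2 : t j = u
        · exact absurd (h1.trans h2.symm) hne
        · have : sw (t i) = v := by simp [hsw, h1]
          have h2' : sw (t j) = t j := by simp [hsw, h2]
          rw [this, h2']
          exact Or.inr (Or.inl ⟨rfl, hnev j, h2, h1 ▸ hadj⟩)
        · have : sw (t j) = v := by simp [hsw, h2]
          have h1' : sw (t i) = t i := by simp [hsw, h1]
          rw [this, h1']
          exact Or.inr (Or.inr ⟨rfl, hnev i, h1, (h2 ▸ hadj : G.Adj (t i) u).symm⟩)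
        · have e1 : sw (t i) = t i := by simp [hsw, h1]
          have e2 : sw (t j) = t j := by simp [hsw, h2]
          rw [e1, e2]
          exact Or.inl ⟨hnev i, hnev j, hadj⟩
    · exact ⟨iu, by simp [Function.comp, hsw, hiu]⟩
  -- the image
  set E := D.image (fun t => sw ∘ t) with hE
  have hcardE : E.card = D.card := by
    rw [hE]
    apply Finset.card_image_of_injOn
    intro t ht t' ht' heq
    have r1 := hrecov t (hDfact t ht).2.2
    have r2 := hrecov t' (hDfact t' ht').2.2
    have heq' : sw ∘ t = sw ∘ t' := heq
    rw [← r1, ← r2, heq']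
  -- A and E are inside PT(cloneG)
  have hsub : A ∪ E ⊆ Finset.filter
      (fun t : Fin 4 → α => IsPT (cloneG G u v) t ∧ True) Finset.univ := by
    intro t ht
    rw [Finset.mem_union] at ht
    rw [Finset.mem_filter]
    refine ⟨Finset.mem_univ _, ?_, trivial⟩
    rcases ht with ht | ht
    · rw [hA, Finset.mem_filter] at ht
      obtain ⟨-, hpt, hv⟩ := ht
      have hnev : ∀ i, t i ≠ v := fun i hc => hv ⟨i, hc⟩
      refine ⟨hpt.1, fun i j hcr => ?_⟩
      exact Or.inl ⟨hnev i, hnev j, hpt.2 i j hcr⟩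
    · rw [hE, Finset.mem_image] at ht
      obtain ⟨t₀, ht₀, rfl⟩ := ht
      exact (hswpt t₀ ht₀).1
  have hdisj : Disjoint A E := by
    rw [Finset.disjoint_left]
    intro t htA htE
    rw [hA, Finset.mem_filter] at htA
    rw [hE, Finset.mem_image] at htE
    obtain ⟨t₀, ht₀, rfl⟩ := htE
    exact htA.2.2 (hswpt t₀ ht₀).2
  have hmain : A.card + D.card ≤ fullCount (cloneG G u v) (fun _ => True) := by
    have h1 : A.card + D.card = (A ∪ E).card := by
      rw [Finset.card_union_of_disjoint hdisj, hcardE]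
    rw [h1]
    refine le_trans (Finset.card_le_card hsub) (le_of_eq ?_)
    rw [fullCount]
    exact card_filter_iff (by tauto)
  -- splits
  have hsplit1 : fullCount G (fun _ => True)
      = (Finset.filter (fun t : Fin 4 → α => IsPT G t ∧ v ∈ Set.range t) Finset.univ).card
        + A.card := by
    have step1 : (fullCount G (fun _ => True))
        = (Finset.filter (fun t : Fin 4 → α => IsPT G t) Finset.univ).card := by
      rw [fullCount]; exact card_filter_iff (by tauto)
    rw [step1, hA]
    exact card_split (p := fun t : Fin 4 → α => IsPT G t) (q := fun t => v ∈ Set.range t)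
  have hsplit2 : fullCount G (fun s => u ∈ s)
      = (Finset.filter (fun t : Fin 4 → α =>
          (IsPT G t ∧ u ∈ Set.range t) ∧ v ∈ Set.range t) Finset.univ).card + D.card := by
    have step1 : (fullCount G (fun s => u ∈ s))
        = (Finset.filter (fun t : Fin 4 → α => IsPT G t ∧ u ∈ Set.range t) Finset.univ).card := by
      rw [fullCount]; exact card_filter_iff (by tauto)
    rw [step1, hD]
    exact card_split (p := fun t : Fin 4 → α => IsPT G t ∧ u ∈ Set.range t)
      (q := fun t => v ∈ Set.range t)
  have hv1 : fullCount G (fun s => v ∈ s)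
      = (Finset.filter (fun t : Fin 4 → α => IsPT G t ∧ v ∈ Set.range t) Finset.univ).card := by
    rw [fullCount]; exact card_filter_iff (by tauto)
  have hv2 : fullCount G (fun s => u ∈ s ∧ v ∈ s)
      = (Finset.filter (fun t : Fin 4 → α =>
          (IsPT G t ∧ u ∈ Set.range t) ∧ v ∈ Set.range t) Finset.univ).card := by
    rw [fullCount]; exact card_filter_iff (by tauto)
  omega

end I2
section J

lemma final_arith (r n C m vsc : ℝ)
    (hr : (4:ℝ) ≤ r) (hn : 33 * r^4 + 100 ≤ n)
    (hC0 : 0 ≤ C) (hC6 : 6 * C ≤ n^3)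
    (hm : (r-1)/r * n - 4 ≤ m) (hm0 : 0 ≤ m)
    (hvsc : 2 * m^3 - 8 * n^2 ≤ vsc) :
    (12 * ((r-1)/r)^3 - 1/r^10) * C - n^3/r^4 ≤ vsc := by
  have hr0 : (0:ℝ) < r := by linarith
  have hr40 : (0:ℝ) < r^4 := by positivity
  set q := (r-1)/r with hqdef
  have hq0 : 0 ≤ q := div_nonneg (by linarith) hr0.le
  have hq1 : q ≤ 1 := by rw [hqdef, div_le_one hr0]; linarith
  have hn100 : (100:ℝ) ≤ n := by nlinarith [hr40]
  have hq34 : (3/4:ℝ) ≤ q := by rw [hqdef, le_div_iff₀ hr0]; linarith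
  have hqn : (0:ℝ) ≤ q*n - 4 := by nlinarith
  have hcube : (q*n - 4)^3 ≤ m^3 :=
    pow_le_pow_left₀ hqn (by linarith) 3
  have hA : (12 * q^3 - 1/r^10) * C ≤ 12 * q^3 * C := by
    have h10 : (0:ℝ) ≤ 1/r^10 := by positivity
    nlinarith
  have hB : 12 * q^3 * C ≤ 2 * q^3 * n^3 := by
    have hq3 : (0:ℝ) ≤ q^3 := by positivity
    nlinarith
  have hD : 33 * n^2 ≤ n^3 / r^4 := by
    rw [le_div_iff₀ hr40]
    nlinarith [mul_le_mul_of_nonneg_right (show 33*r^4 ≤ n by linarith) (sq_nonneg n)]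
  have hE : 2*q^3*n^3 - n^3/r^4 ≤ 2*(q*n-4)^3 - 8*n^2 := by
    have h1 : q^2 ≤ 1 := by nlinarith
    have h2 : (0:ℝ) ≤ q*n := mul_nonneg hq0 (by linarith)
    have h3 : (128:ℝ) ≤ n^2 := by nlinarith
    nlinarith [hD, mul_nonneg (sub_nonneg.2 h1) (sq_nonneg n), h2, h3]
  calc (12 * q^3 - 1/r^10) * C - n^3/r^4
      ≤ 12 * q^3 * C - n^3/r^4 := by linarith
    _ ≤ 2 * q^3 * n^3 - n^3/r^4 := by linarith
    _ ≤ 2*(q*n-4)^3 - 8*n^2 := hE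
    _ ≤ 2*m^3 - 8*n^2 := by linarith
    _ ≤ vsc := hvsc

theorem extremal_min_vertex_P3_count (r : ℕ) (hr : 4 ≤ r) :
    ∃ n₀ : ℕ, ∀ n : ℕ, n₀ ≤ n →
      ∀ G : SimpleGraph (Fin n), IsFFree (⊤ : SimpleGraph (Fin (r + 1))) G →
        subgraphCount P3 G = genTuran n P3 (⊤ : SimpleGraph (Fin (r + 1))) →
        ∀ v : Fin n,
          (12 * (((r : ℝ) - 1) / r) ^ 3 - 1 / (r : ℝ) ^ 10) * (n - 1).choose 3 -
              (n : ℝ) ^ 3 / r ^ 4 ≤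
            (vertexSubgraphCount P3 G v : ℝ) := by
  refine ⟨33 * r ^ 4 + 100, ?_⟩
  intro n hn G hFree hExt v
  have hr0 : 0 < r := by omega
  have hr4 : 0 ≤ 33 * r ^ 4 := Nat.zero_le _
  have hn100 : 100 ≤ n := by omega
  have hn20 : 20 ≤ n := by omega
  have hnpos : 0 < n := by omega
  haveI : Nonempty (Fin n) := ⟨⟨0, hnpos⟩⟩
  have hGcf : G.CliqueFree (r+1) := (isFFree_iff _ G).1 hFree
  set m := n - n / r - 4 with hm
  have hTl : n * m ^ 3 ≤ fullCount (turanGraph n r) (fun _ => True) := turan_lower n r hr hn20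
  have hTfree : IsFFree (⊤ : SimpleGraph (Fin (r+1))) (turanGraph n r) :=
    (isFFree_iff _ _).2 (turanGraph_cliqueFree hr0)
  have hTle : subgraphCount P3 (turanGraph n r) ≤ subgraphCount P3 G := by
    rw [hExt]; exact le_genTuran _ _ _ hTfree
  have hfullG : n * m ^ 3 ≤ fullCount G (fun _ => True) := by
    have h1 := two_mul_sc (turanGraph n r)
    have h2 := two_mul_sc G
    omega
  obtain ⟨u, hu⟩ := exists_big_vertex G
  rw [Fintype.card_fin] at hu
  have hkeyv : 4 * fullCount G (fun _ => True)
      ≤ n * fullCount G (fun s => v ∈ s) + 16 * n ^ 3 := by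
    by_cases huv : u = v
    · subst huv
      exact le_trans hu (Nat.le_add_right _ _)
    · have hclonefree : (cloneG G u v).CliqueFree (r+1) := clone_cliqueFree huv hGcf
      have hcc := clone_count G u v huv
      have hsc' : subgraphCount P3 (cloneG G u v) ≤ subgraphCount P3 G := by
        rw [hExt]; exact le_genTuran _ _ _ ((isFFree_iff _ _).2 hclonefree)
      have h1 := two_mul_sc (cloneG G u v)
      have h2 := two_mul_sc G
      have hpair := pair_count_le G u v huv
      rw [Fintype.card_fin] at hpair
      have hTu : fullCount G (fun s => u ∈ s)
          ≤ fullCount G (fun s => v ∈ s) + 16 * n^2 := by omega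
      calc 4 * fullCount G (fun _ => True) ≤ n * fullCount G (fun s => u ∈ s) := hu
        _ ≤ n * (fullCount G (fun s => v ∈ s) + 16 * n^2) := Nat.mul_le_mul_left _ hTu
        _ = n * fullCount G (fun s => v ∈ s) + 16 * n^3 := by ring
  have hvsc2 := two_mul_vsc G v
  have hNat : 4 * (n * m ^ 3) ≤ n * (2 * vertexSubgraphCount P3 G v) + 16 * n ^ 3 := by
    rw [hvsc2]
    omega
  have hchoose : 6 * (n-1).choose 3 ≤ n ^ 3 := by
    have hdvd := Nat.factorial_dvd_descFactorial (n-1) 3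
    have hfac : Nat.factorial 3 = 6 := by norm_num [Nat.factorial]
    rw [hfac] at hdvd
    have h1 : 6 * (n-1).choose 3 = (n-1).descFactorial 3 := by
      rw [Nat.choose_eq_descFactorial_div_factorial, hfac]
      omega
    rw [h1]
    calc (n-1).descFactorial 3 ≤ (n-1)^3 := Nat.descFactorial_le_pow _ _
      _ ≤ n^3 := Nat.pow_le_pow_left (by omega) 3
  -- cast to ℝ
  have hdivle : n / r ≤ n := Nat.div_le_self n r
  have hnr4 : n / r + 4 ≤ n := by
    have h4 : n / r ≤ n / 4 := Nat.div_le_div_left hr (by norm_num)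
    have h44 : n / 4 * 4 ≤ n := Nat.div_mul_le_self n 4
    omega
  have hmcast : ((r:ℝ) - 1)/r * n - 4 ≤ (m:ℝ) := by
    have h4 : 4 ≤ n - n / r := by omega
    have e1 : (m:ℝ) = (n:ℝ) - ((n/r : ℕ):ℝ) - 4 := by
      rw [hm, Nat.cast_sub h4, Nat.cast_sub hdivle]
      norm_num
    have hdiv : ((n/r : ℕ):ℝ) ≤ (n:ℝ)/r := Nat.cast_div_le
    have hrR : (0:ℝ) < r := by positivity
    have e2 : ((r:ℝ) - 1)/r * n = (n:ℝ) - (n:ℝ)/r := by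
      field_simp
    rw [e2, e1]
    linarith
  have hm0 : (0:ℝ) ≤ (m:ℝ) := Nat.cast_nonneg _
  have hrealNat : (4:ℝ) * ((n:ℝ) * (m:ℝ)^3)
      ≤ (n:ℝ) * (2 * (vertexSubgraphCount P3 G v : ℝ)) + 16 * (n:ℝ)^3 := by
    exact_mod_cast hNat
  have hnR : (0:ℝ) < n := by exact_mod_cast hnpos
  have hreal : 2 * (m:ℝ)^3 - 8 * (n:ℝ)^2 ≤ (vertexSubgraphCount P3 G v : ℝ) := by
    nlinarith [hrealNat, hnR]
  have hC0 : (0:ℝ) ≤ ((n-1).choose 3 : ℝ) := Nat.cast_nonneg _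
  have hC6 : 6 * ((n-1).choose 3 : ℝ) ≤ (n:ℝ)^3 := by exact_mod_cast hchoose
  have hnRge : 33 * (r:ℝ)^4 + 100 ≤ (n:ℝ) := by exact_mod_cast hn
  have hrR : (4:ℝ) ≤ (r:ℝ) := by exact_mod_cast hr
  exact final_arith (r:ℝ) (n:ℝ) ((n-1).choose 3 : ℝ) (m:ℝ) _ hrR hnRge hC0 hC6 hmcast hm0 hreal

end J
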